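/- With notation as in the previous statement (full eight-block splitting of B and D, BD^T = 0, ker B = im D^T, ker D = im B^T, R, G positive definite, E_c, 𝓡_l nonsingular), the dimension of the kernel of A = [[B_c E_c, 0, B_r R, 0, B_g, B_j], [0, D_l 𝓡_l, D_r, D_u, D_g G, 0]] equals dim ker (B_c B_j) + dim ker (D_u D_l). -/

import Mathlib

open Matrix

section Aux
variable {p t nm nc nr nu nw nl ng nj : ℕ}
    (Bm : Matrix (Fin p) (Fin nm) ℝ) (Bc : Matrix (Fin p) (Fin nc) ℝ)
    (Br : Matrix (Fin p) (Fin nr) ℝ) (Bu : Matrix (Fin p) (Fin nu) ℝ)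
    (Bw : Matrix (Fin p) (Fin nw) ℝ) (Bl : Matrix (Fin p) (Fin nl) ℝ)
    (Bg : Matrix (Fin p) (Fin ng) ℝ) (Bj : Matrix (Fin p) (Fin nj) ℝ)
    (Dm : Matrix (Fin t) (Fin nm) ℝ) (Dc : Matrix (Fin t) (Fin nc) ℝ)
    (Dr : Matrix (Fin t) (Fin nr) ℝ) (Du : Matrix (Fin t) (Fin nu) ℝ)
    (Dw : Matrix (Fin t) (Fin nw) ℝ) (Dl : Matrix (Fin t) (Fin nl) ℝ)
    (Dg : Matrix (Fin t) (Fin ng) ℝ) (Dj : Matrix (Fin t) (Fin nj) ℝ)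
    (R : Matrix (Fin nr) (Fin nr) ℝ) (G : Matrix (Fin ng) (Fin ng) ℝ)
    (Ec : Matrix (Fin nc) (Fin nc) ℝ) (Rl : Matrix (Fin nl) (Fin nl) ℝ)

lemma memA_iff (x : (Fin nc ⊕ (Fin nl ⊕ (Fin nr ⊕ (Fin nu ⊕ (Fin ng ⊕ Fin nj))))) → ℝ) :
    x ∈ LinearMap.ker (Matrix.fromRows
      (Matrix.fromCols (Bc * Ec) (Matrix.fromCols (0 : Matrix (Fin p) (Fin nl) ℝ)
        (Matrix.fromCols (Br * R) (Matrix.fromCols (0 : Matrix (Fin p) (Fin nu) ℝ)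
          (Matrix.fromCols Bg Bj)))))
      (Matrix.fromCols (0 : Matrix (Fin t) (Fin nc) ℝ)
        (Matrix.fromCols (Dl * Rl) (Matrix.fromCols Dr
          (Matrix.fromCols Du (Matrix.fromCols (Dg * G)
            (0 : Matrix (Fin t) (Fin nj) ℝ))))))).mulVecLin ↔
      (Bc *ᵥ (Ec *ᵥ fun i => x (Sum.inl i)) +
        (Br *ᵥ (R *ᵥ fun i => x (Sum.inr (Sum.inr (Sum.inl i)))) +
          ((Bg *ᵥ fun i => x (Sum.inr (Sum.inr (Sum.inr (Sum.inr (Sum.inl i)))))) +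
            Bj *ᵥ fun i => x (Sum.inr (Sum.inr (Sum.inr (Sum.inr (Sum.inr i))))))) = 0) ∧
      (Dl *ᵥ (Rl *ᵥ fun i => x (Sum.inr (Sum.inl i))) +
        ((Dr *ᵥ fun i => x (Sum.inr (Sum.inr (Sum.inl i)))) +
          ((Du *ᵥ fun i => x (Sum.inr (Sum.inr (Sum.inr (Sum.inl i))))) +
            Dg *ᵥ (G *ᵥ fun i => x (Sum.inr (Sum.inr (Sum.inr (Sum.inr (Sum.inl i))))))) ) = 0) := by
  have fc_mulVec : ∀ {m' n₁ n₂ : Type} [Fintype n₁] [Fintype n₂] (A : Matrix m' n₁ ℝ)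
      (B : Matrix m' n₂ ℝ) (v : n₁ ⊕ n₂ → ℝ),
      Matrix.fromCols A B *ᵥ v = A *ᵥ (v ∘ Sum.inl) + B *ᵥ (v ∘ Sum.inr) := by
    intro m' n₁ n₂ _ _ A B v
    conv_lhs => rw [← Sum.elim_comp_inl_inr v]
    rw [Matrix.fromCols_mulVec_sumElim]
  rw [LinearMap.mem_ker, Matrix.mulVecLin_apply, Matrix.fromRows_mulVec]
  constructor
  · intro h
    have h1 := congrFun h
    constructor
    · have : (Matrix.fromCols (Bc * Ec) (Matrix.fromCols (0 : Matrix (Fin p) (Fin nl) ℝ)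
        (Matrix.fromCols (Br * R) (Matrix.fromCols (0 : Matrix (Fin p) (Fin nu) ℝ)
          (Matrix.fromCols Bg Bj))))) *ᵥ x = 0 := funext fun i => h1 (Sum.inl i)
      simpa [fc_mulVec, Function.comp_def, Matrix.zero_mulVec, ← Matrix.mulVec_mulVec] using this
    · have : (Matrix.fromCols (0 : Matrix (Fin t) (Fin nc) ℝ)
        (Matrix.fromCols (Dl * Rl) (Matrix.fromCols Dr
          (Matrix.fromCols Du (Matrix.fromCols (Dg * G)
            (0 : Matrix (Fin t) (Fin nj) ℝ)))))) *ᵥ x = 0 := funext fun i => h1 (Sum.inr i)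
      simpa [fc_mulVec, Function.comp_def, Matrix.zero_mulVec, ← Matrix.mulVec_mulVec] using this
  · rintro ⟨h1, h2⟩
    funext i
    cases i with
    | inl i =>
      have : (Matrix.fromCols (Bc * Ec) (Matrix.fromCols (0 : Matrix (Fin p) (Fin nl) ℝ)
        (Matrix.fromCols (Br * R) (Matrix.fromCols (0 : Matrix (Fin p) (Fin nu) ℝ)
          (Matrix.fromCols Bg Bj))))) *ᵥ x = 0 := by
        simpa [fc_mulVec, Function.comp_def, Matrix.zero_mulVec, ← Matrix.mulVec_mulVec] using h1
      simpa using congrFun this i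
    | inr i =>
      have : (Matrix.fromCols (0 : Matrix (Fin t) (Fin nc) ℝ)
        (Matrix.fromCols (Dl * Rl) (Matrix.fromCols Dr
          (Matrix.fromCols Du (Matrix.fromCols (Dg * G)
            (0 : Matrix (Fin t) (Fin nj) ℝ)))))) *ᵥ x = 0 := by
        simpa [fc_mulVec, Function.comp_def, Matrix.zero_mulVec, ← Matrix.mulVec_mulVec] using h2
      simpa using congrFun this i

lemma memM_iff {m n₁ n₂ : ℕ} (A : Matrix (Fin m) (Fin n₁) ℝ) (B : Matrix (Fin m) (Fin n₂) ℝ)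
    (y : (Fin n₁ ⊕ Fin n₂) → ℝ) :
    y ∈ LinearMap.ker (Matrix.fromCols A B).mulVecLin ↔
      A *ᵥ (fun i => y (Sum.inl i)) + B *ᵥ (fun i => y (Sum.inr i)) = 0 := by
  rw [LinearMap.mem_ker, Matrix.mulVecLin_apply]
  conv_lhs => rw [← Sum.elim_comp_inl_inr y, Matrix.fromCols_mulVec_sumElim]
  rw [Function.comp_def, Function.comp_def]

lemma key_zero
    (hkerB : LinearMap.ker (Matrix.fromCols Bm (Matrix.fromCols Bc (Matrix.fromCols Br
      (Matrix.fromCols Bu (Matrix.fromCols Bw (Matrix.fromCols Bl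
        (Matrix.fromCols Bg Bj))))))).mulVecLin
        = LinearMap.range ((Matrix.fromCols Dm (Matrix.fromCols Dc (Matrix.fromCols Dr
      (Matrix.fromCols Du (Matrix.fromCols Dw (Matrix.fromCols Dl
        (Matrix.fromCols Dg Dj)))))))ᵀ).mulVecLin)
    (hR : ∀ u : Fin nr → ℝ, u ≠ 0 → 0 < u ⬝ᵥ R.mulVec u)
    (hG : ∀ u : Fin ng → ℝ, u ≠ 0 → 0 < u ⬝ᵥ G.mulVec u)
    (a : Fin nc → ℝ) (b : Fin nl → ℝ) (x3 : Fin nr → ℝ) (x4 : Fin nu → ℝ)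
    (x5 : Fin ng → ℝ) (x6 : Fin nj → ℝ)
    (h1 : Bc *ᵥ a + (Br *ᵥ (R *ᵥ x3) + (Bg *ᵥ x5 + Bj *ᵥ x6)) = 0)
    (h2 : Dl *ᵥ b + (Dr *ᵥ x3 + (Du *ᵥ x4 + Dg *ᵥ (G *ᵥ x5))) = 0) :
    x3 = 0 ∧ x5 = 0 := by
  set V : Fin nm ⊕ (Fin nc ⊕ (Fin nr ⊕ (Fin nu ⊕ (Fin nw ⊕ (Fin nl ⊕ (Fin ng ⊕ Fin nj)))))) → ℝ :=
    Sum.elim 0 (Sum.elim a (Sum.elim (R *ᵥ x3) (Sum.elim 0 (Sum.elim 0 (Sum.elim 0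
      (Sum.elim x5 x6)))))) with hVdef
  set W : Fin nm ⊕ (Fin nc ⊕ (Fin nr ⊕ (Fin nu ⊕ (Fin nw ⊕ (Fin nl ⊕ (Fin ng ⊕ Fin nj)))))) → ℝ :=
    Sum.elim 0 (Sum.elim 0 (Sum.elim x3 (Sum.elim x4 (Sum.elim 0 (Sum.elim b
      (Sum.elim (G *ᵥ x5) 0)))))) with hWdef
  have hVmem : V ∈ LinearMap.ker (Matrix.fromCols Bm (Matrix.fromCols Bc (Matrix.fromCols Br
      (Matrix.fromCols Bu (Matrix.fromCols Bw (Matrix.fromCols Bl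
        (Matrix.fromCols Bg Bj))))))).mulVecLin := by
    rw [LinearMap.mem_ker, Matrix.mulVecLin_apply, hVdef]
    simp only [Matrix.fromCols_mulVec_sumElim, Matrix.mulVec_zero, zero_add, add_zero]
    rw [← h1]
  have hW : (Matrix.fromCols Dm (Matrix.fromCols Dc (Matrix.fromCols Dr
      (Matrix.fromCols Du (Matrix.fromCols Dw (Matrix.fromCols Dl
        (Matrix.fromCols Dg Dj))))))) *ᵥ W = 0 := by
    rw [hWdef]
    simp only [Matrix.fromCols_mulVec_sumElim, Matrix.mulVec_zero, zero_add, add_zero]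
    rw [← h2]; abel
  rw [hkerB] at hVmem
  obtain ⟨z, hz⟩ := hVmem
  have hdot : V ⬝ᵥ W = 0 := by
    rw [← hz, Matrix.mulVecLin_apply, Matrix.mulVec_transpose, ← Matrix.dotProduct_mulVec, hW,
      dotProduct_zero]
  have hdot2 : x3 ⬝ᵥ (R *ᵥ x3) + x5 ⬝ᵥ (G *ᵥ x5) = 0 := by
    rw [hVdef, hWdef] at hdot
    simp only [sumElim_dotProduct_sumElim, dotProduct_zero, zero_dotProduct,
      zero_add, add_zero] at hdot
    rwa [dotProduct_comm] at hdot
  have hr0 : 0 ≤ x3 ⬝ᵥ (R *ᵥ x3) := by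
    rcases eq_or_ne x3 0 with h | h
    · simp [h]
    · exact (hR x3 h).le
  have hg0 : 0 ≤ x5 ⬝ᵥ (G *ᵥ x5) := by
    rcases eq_or_ne x5 0 with h | h
    · simp [h]
    · exact (hG x5 h).le
  have h3 : x3 ⬝ᵥ (R *ᵥ x3) = 0 := by linarith
  have h5 : x5 ⬝ᵥ (G *ᵥ x5) = 0 := by linarith
  constructor
  · by_contra h
    exact absurd h3 (hR x3 h).ne'
  · by_contra h
    exact absurd h5 (hG x5 h).ne'


set_option maxHeartbeats 1000000 in
noncomputable def kernelEquiv
    (hkerB : LinearMap.ker (Matrix.fromCols Bm (Matrix.fromCols Bc (Matrix.fromCols Br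
      (Matrix.fromCols Bu (Matrix.fromCols Bw (Matrix.fromCols Bl
        (Matrix.fromCols Bg Bj))))))).mulVecLin
        = LinearMap.range ((Matrix.fromCols Dm (Matrix.fromCols Dc (Matrix.fromCols Dr
      (Matrix.fromCols Du (Matrix.fromCols Dw (Matrix.fromCols Dl
        (Matrix.fromCols Dg Dj)))))))ᵀ).mulVecLin)
    (hR : ∀ u : Fin nr → ℝ, u ≠ 0 → 0 < u ⬝ᵥ R.mulVec u)
    (hG : ∀ u : Fin ng → ℝ, u ≠ 0 → 0 < u ⬝ᵥ G.mulVec u)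
    (hEc : Ec.det ≠ 0) (hRl : Rl.det ≠ 0) :
    ↥(LinearMap.ker (Matrix.fromRows
      (Matrix.fromCols (Bc * Ec) (Matrix.fromCols (0 : Matrix (Fin p) (Fin nl) ℝ)
        (Matrix.fromCols (Br * R) (Matrix.fromCols (0 : Matrix (Fin p) (Fin nu) ℝ)
          (Matrix.fromCols Bg Bj)))))
      (Matrix.fromCols (0 : Matrix (Fin t) (Fin nc) ℝ)
        (Matrix.fromCols (Dl * Rl) (Matrix.fromCols Dr
          (Matrix.fromCols Du (Matrix.fromCols (Dg * G)
            (0 : Matrix (Fin t) (Fin nj) ℝ))))))).mulVecLin) ≃ₗ[ℝ]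
      (↥(LinearMap.ker (Matrix.fromCols Bc Bj).mulVecLin) ×
       ↥(LinearMap.ker (Matrix.fromCols Du Dl).mulVecLin)) where
  toFun x :=
      (⟨Sum.elim (Ec *ᵥ fun i => x.1 (Sum.inl i))
          (fun i => x.1 (Sum.inr (Sum.inr (Sum.inr (Sum.inr (Sum.inr i)))))), by
        obtain ⟨h1, h2⟩ := (memA_iff Bc Br Bg Bj Dr Du Dl Dg R G Ec Rl x.1).mp x.2
        obtain ⟨h3, h5⟩ := key_zero Bm Bc Br Bu Bw Bl Bg Bj Dm Dc Dr Du Dw Dl Dg Dj R G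
          hkerB hR hG _ _ _ _ _ _ h1 h2
        rw [memM_iff]
        rw [h3, h5] at h1
        simpa using h1⟩,
       ⟨Sum.elim (fun i => x.1 (Sum.inr (Sum.inr (Sum.inr (Sum.inl i)))))
          (Rl *ᵥ fun i => x.1 (Sum.inr (Sum.inl i))), by
        obtain ⟨h1, h2⟩ := (memA_iff Bc Br Bg Bj Dr Du Dl Dg R G Ec Rl x.1).mp x.2
        obtain ⟨h3, h5⟩ := key_zero Bm Bc Br Bu Bw Bl Bg Bj Dm Dc Dr Du Dw Dl Dg Dj R G
          hkerB hR hG _ _ _ _ _ _ h1 h2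
        rw [memM_iff]
        rw [h3, h5] at h2
        simp only [Matrix.mulVec_zero, zero_add, add_zero, Sum.elim_inl, Sum.elim_inr] at h2 ⊢
        rw [← h2]; abel⟩)
  map_add' x y := by
    refine Prod.ext (Subtype.ext ?_) (Subtype.ext ?_)
    · show Sum.elim _ _ = (Sum.elim _ _) + (Sum.elim _ _)
      funext i
      rcases i with i | i
      · have h : (fun j => (x.1 + y.1) (Sum.inl j)) =
            (fun j => x.1 (Sum.inl j)) + (fun j => y.1 (Sum.inl j)) := rfl
        show (Ec *ᵥ fun j => (x.1 + y.1) (Sum.inl j)) i = _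
        rw [h, Matrix.mulVec_add]
        rfl
      · rfl
    · show Sum.elim _ _ = (Sum.elim _ _) + (Sum.elim _ _)
      funext i
      rcases i with i | i
      · rfl
      · have h : (fun j => (x.1 + y.1) (Sum.inr (Sum.inl j))) =
            (fun j => x.1 (Sum.inr (Sum.inl j))) + (fun j => y.1 (Sum.inr (Sum.inl j))) := rfl
        show (Rl *ᵥ fun j => (x.1 + y.1) (Sum.inr (Sum.inl j))) i = _
        rw [h, Matrix.mulVec_add]
        rfl
  map_smul' c x := by
    refine Prod.ext (Subtype.ext ?_) (Subtype.ext ?_)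
    · show Sum.elim _ _ = c • (Sum.elim _ _)
      funext i
      rcases i with i | i
      · have h : (fun j => (c • x.1) (Sum.inl j)) = c • (fun j => x.1 (Sum.inl j)) := rfl
        show (Ec *ᵥ fun j => (c • x.1) (Sum.inl j)) i = _
        rw [h, Matrix.mulVec_smul]
        rfl
      · rfl
    · show Sum.elim _ _ = c • (Sum.elim _ _)
      funext i
      rcases i with i | i
      · rfl
      · have h : (fun j => (c • x.1) (Sum.inr (Sum.inl j))) =
            c • (fun j => x.1 (Sum.inr (Sum.inl j))) := rfl
        show (Rl *ᵥ fun j => (c • x.1) (Sum.inr (Sum.inl j))) i = _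
        rw [h, Matrix.mulVec_smul]
        rfl
  invFun y :=
      ⟨Sum.elim (Ec⁻¹ *ᵥ fun i => y.1.1 (Sum.inl i))
        (Sum.elim (Rl⁻¹ *ᵥ fun i => y.2.1 (Sum.inr i))
          (Sum.elim 0 (Sum.elim (fun i => y.2.1 (Sum.inl i))
            (Sum.elim 0 (fun i => y.1.1 (Sum.inr i)))))), by
        have hEcr : Ec * Ec⁻¹ = 1 := Matrix.mul_nonsing_inv Ec (isUnit_iff_ne_zero.mpr hEc)
        have hRlr : Rl * Rl⁻¹ = 1 := Matrix.mul_nonsing_inv Rl (isUnit_iff_ne_zero.mpr hRl)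
        rw [memA_iff]
        have hy1 := (memM_iff Bc Bj y.1.1).mp y.1.2
        have hy2 := (memM_iff Du Dl y.2.1).mp y.2.2
        have e1 : Ec *ᵥ (Ec⁻¹ *ᵥ fun i => y.1.1 (Sum.inl i)) = fun i => y.1.1 (Sum.inl i) := by
          rw [Matrix.mulVec_mulVec, hEcr, Matrix.one_mulVec]
        have e2 : Rl *ᵥ (Rl⁻¹ *ᵥ fun i => y.2.1 (Sum.inr i)) = fun i => y.2.1 (Sum.inr i) := by
          rw [Matrix.mulVec_mulVec, hRlr, Matrix.one_mulVec]
        constructor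
        · show Bc *ᵥ (Ec *ᵥ (Ec⁻¹ *ᵥ fun i => y.1.1 (Sum.inl i))) +
            (Br *ᵥ (R *ᵥ (0 : Fin nr → ℝ)) + (Bg *ᵥ (0 : Fin ng → ℝ) +
              Bj *ᵥ fun i => y.1.1 (Sum.inr i))) = 0
          rw [e1]
          simpa using hy1
        · show Dl *ᵥ (Rl *ᵥ (Rl⁻¹ *ᵥ fun i => y.2.1 (Sum.inr i))) +
            (Dr *ᵥ (0 : Fin nr → ℝ) + ((Du *ᵥ fun i => y.2.1 (Sum.inl i)) +
              Dg *ᵥ (G *ᵥ (0 : Fin ng → ℝ)))) = 0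
          rw [e2]
          simp only [Matrix.mulVec_zero, zero_add, add_zero]
          rw [← hy2]; abel⟩
  left_inv x := by
    have hEcl : Ec⁻¹ * Ec = 1 := Matrix.nonsing_inv_mul Ec (isUnit_iff_ne_zero.mpr hEc)
    have hRll : Rl⁻¹ * Rl = 1 := Matrix.nonsing_inv_mul Rl (isUnit_iff_ne_zero.mpr hRl)
    obtain ⟨h1, h2⟩ := (memA_iff Bc Br Bg Bj Dr Du Dl Dg R G Ec Rl x.1).mp x.2
    obtain ⟨h3, h5⟩ := key_zero Bm Bc Br Bu Bw Bl Bg Bj Dm Dc Dr Du Dw Dl Dg Dj R G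
      hkerB hR hG _ _ _ _ _ _ h1 h2
    apply Subtype.ext
    funext i
    rcases i with i | (i | (i | (i | (i | i))))
    · show (Ec⁻¹ *ᵥ (Ec *ᵥ fun j => x.1 (Sum.inl j))) i = x.1 (Sum.inl i)
      rw [Matrix.mulVec_mulVec, hEcl, Matrix.one_mulVec]
    · show (Rl⁻¹ *ᵥ (Rl *ᵥ fun j => x.1 (Sum.inr (Sum.inl j)))) i = x.1 (Sum.inr (Sum.inl i))
      rw [Matrix.mulVec_mulVec, hRll, Matrix.one_mulVec]
    · exact (congrFun h3 i).symm
    · rfl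
    · exact (congrFun h5 i).symm
    · rfl
  right_inv y := by
    have hEcr : Ec * Ec⁻¹ = 1 := Matrix.mul_nonsing_inv Ec (isUnit_iff_ne_zero.mpr hEc)
    have hRlr : Rl * Rl⁻¹ = 1 := Matrix.mul_nonsing_inv Rl (isUnit_iff_ne_zero.mpr hRl)
    refine Prod.ext (Subtype.ext ?_) (Subtype.ext ?_)
    · funext i
      rcases i with i | i
      · show (Ec *ᵥ (Ec⁻¹ *ᵥ fun j => y.1.1 (Sum.inl j))) i = y.1.1 (Sum.inl i)
        rw [Matrix.mulVec_mulVec, hEcr, Matrix.one_mulVec]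
      · rfl
    · funext i
      rcases i with i | i
      · rfl
      · show (Rl *ᵥ (Rl⁻¹ *ᵥ fun j => y.2.1 (Sum.inr j))) i = y.2.1 (Sum.inr i)
        rw [Matrix.mulVec_mulVec, hRlr, Matrix.one_mulVec]

end Aux

/-- Kernel-dimension count in Theorem 3.3: the dimension of the kernel of
A = [[B_c E_c, 0, B_r R, 0, B_g, B_j], [0, D_l 𝓡_l, D_r, D_u, D_g G, 0]] equals
dim ker (B_c B_j) + dim ker (D_u D_l), i.e. the number of independent IC-cutsets
plus the number of independent VL-loops. -/
theorem kernel_dim_of_A {p t nm nc nr nu nw nl ng nj : ℕ}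
    (Bm : Matrix (Fin p) (Fin nm) ℝ) (Bc : Matrix (Fin p) (Fin nc) ℝ)
    (Br : Matrix (Fin p) (Fin nr) ℝ) (Bu : Matrix (Fin p) (Fin nu) ℝ)
    (Bw : Matrix (Fin p) (Fin nw) ℝ) (Bl : Matrix (Fin p) (Fin nl) ℝ)
    (Bg : Matrix (Fin p) (Fin ng) ℝ) (Bj : Matrix (Fin p) (Fin nj) ℝ)
    (Dm : Matrix (Fin t) (Fin nm) ℝ) (Dc : Matrix (Fin t) (Fin nc) ℝ)
    (Dr : Matrix (Fin t) (Fin nr) ℝ) (Du : Matrix (Fin t) (Fin nu) ℝ)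
    (Dw : Matrix (Fin t) (Fin nw) ℝ) (Dl : Matrix (Fin t) (Fin nl) ℝ)
    (Dg : Matrix (Fin t) (Fin ng) ℝ) (Dj : Matrix (Fin t) (Fin nj) ℝ)
    (R : Matrix (Fin nr) (Fin nr) ℝ) (G : Matrix (Fin ng) (Fin ng) ℝ)
    (Ec : Matrix (Fin nc) (Fin nc) ℝ) (Rl : Matrix (Fin nl) (Fin nl) ℝ)
    (hBD : (Matrix.fromCols Bm (Matrix.fromCols Bc (Matrix.fromCols Br
      (Matrix.fromCols Bu (Matrix.fromCols Bw (Matrix.fromCols Bl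
        (Matrix.fromCols Bg Bj))))))) * (Matrix.fromCols Dm (Matrix.fromCols Dc (Matrix.fromCols Dr
      (Matrix.fromCols Du (Matrix.fromCols Dw (Matrix.fromCols Dl
        (Matrix.fromCols Dg Dj)))))))ᵀ = 0)
    (hkerB : LinearMap.ker (Matrix.fromCols Bm (Matrix.fromCols Bc (Matrix.fromCols Br
      (Matrix.fromCols Bu (Matrix.fromCols Bw (Matrix.fromCols Bl
        (Matrix.fromCols Bg Bj))))))).mulVecLin
        = LinearMap.range ((Matrix.fromCols Dm (Matrix.fromCols Dc (Matrix.fromCols Dr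
      (Matrix.fromCols Du (Matrix.fromCols Dw (Matrix.fromCols Dl
        (Matrix.fromCols Dg Dj)))))))ᵀ).mulVecLin)
    (hkerD : LinearMap.ker (Matrix.fromCols Dm (Matrix.fromCols Dc (Matrix.fromCols Dr
      (Matrix.fromCols Du (Matrix.fromCols Dw (Matrix.fromCols Dl
        (Matrix.fromCols Dg Dj))))))).mulVecLin
        = LinearMap.range ((Matrix.fromCols Bm (Matrix.fromCols Bc (Matrix.fromCols Br
      (Matrix.fromCols Bu (Matrix.fromCols Bw (Matrix.fromCols Bl
        (Matrix.fromCols Bg Bj)))))))ᵀ).mulVecLin)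
    (hR : ∀ u : Fin nr → ℝ, u ≠ 0 → 0 < u ⬝ᵥ R.mulVec u)
    (hG : ∀ u : Fin ng → ℝ, u ≠ 0 → 0 < u ⬝ᵥ G.mulVec u)
    (hEc : Ec.det ≠ 0) (hRl : Rl.det ≠ 0)
    :
    Module.finrank ℝ ↥(LinearMap.ker (Matrix.fromRows
      (Matrix.fromCols (Bc * Ec) (Matrix.fromCols (0 : Matrix (Fin p) (Fin nl) ℝ)
        (Matrix.fromCols (Br * R) (Matrix.fromCols (0 : Matrix (Fin p) (Fin nu) ℝ)
          (Matrix.fromCols Bg Bj)))))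
      (Matrix.fromCols (0 : Matrix (Fin t) (Fin nc) ℝ)
        (Matrix.fromCols (Dl * Rl) (Matrix.fromCols Dr
          (Matrix.fromCols Du (Matrix.fromCols (Dg * G)
            (0 : Matrix (Fin t) (Fin nj) ℝ))))))).mulVecLin)
      = Module.finrank ℝ ↥(LinearMap.ker (Matrix.fromCols Bc Bj).mulVecLin)
        + Module.finrank ℝ ↥(LinearMap.ker (Matrix.fromCols Du Dl).mulVecLin) := by
  
  rw [(kernelEquiv Bm Bc Br Bu Bw Bl Bg Bj Dm Dc Dr Du Dw Dl Dg Dj R G Ec Rl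
    hkerB hR hG hEc hRl).finrank_eq, Module.finrank_prod]
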